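/- For every y ∈ A and every z = (b₀,b₁,b₂) ∈ J one has U_{(0,y,0)}(z) = (λ•(b₁·adjugate(y)), y·b₂·y, λ•(adjugate(y)·b₀)). Moreover, the R-linear map U_{(0,y,0)} : J → J is bijective if and only if det(y) is a unit of R. -/

import Mathlib

open Matrix

/-- The underlying `R`-module of the first Tits construction `J(A, λ)`,
where `A` is the algebra of 3×3 matrices over `R`: it is `A × A × A`. -/
abbrev Tits (R : Type*) [CommRing R] :=
  Matrix (Fin 3) (Fin 3) R × Matrix (Fin 3) (Fin 3) R × Matrix (Fin 3) (Fin 3) R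

section TitsDefs

variable {R : Type*} [CommRing R]

/-- The cubic norm `N(a₀,a₁,a₂) = det a₀ + λ det a₁ + λ⁻¹ det a₂ − tr(a₀a₁a₂)`. -/
def titsN (lam : Rˣ) (x : Tits R) : R :=
  x.1.det + (lam : R) * x.2.1.det + ((lam⁻¹ : Rˣ) : R) * x.2.2.det
    - (x.1 * x.2.1 * x.2.2).trace

/-- The adjoint map
`(a₀,a₁,a₂)^# = (adj a₀ − a₁a₂, λ⁻¹ adj a₂ − a₀a₁, λ adj a₁ − a₂a₀)`. -/
def titsSharp (lam : Rˣ) (x : Tits R) : Tits R :=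
  (x.1.adjugate - x.2.1 * x.2.2,
   ((lam⁻¹ : Rˣ) : R) • x.2.2.adjugate - x.1 * x.2.1,
   (lam : R) • x.2.1.adjugate - x.2.2 * x.1)

/-- The cross product `x × y = (x+y)^# − x^# − y^#`. -/
def titsCross (lam : Rˣ) (x y : Tits R) : Tits R :=
  titsSharp lam (x + y) - titsSharp lam x - titsSharp lam y

/-- The trace bilinear form `T(x,y) = tr(a₀b₀) + tr(a₁b₂) + tr(a₂b₁)`. -/
def titsT (x y : Tits R) : R :=
  (x.1 * y.1).trace + (x.2.1 * y.2.2).trace + (x.2.2 * y.2.1).trace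

/-- The `U`-operator `U_x z = T(x,z) • x − x^# × z`. -/
def titsU (lam : Rˣ) (x z : Tits R) : Tits R :=
  titsT x z • x - titsCross lam (titsSharp lam x) z

/-- The partial polarization `∂N` of the cubic norm:
`∂N((a₀,a₁,a₂),(b₀,b₁,b₂)) = tr(adj a₀ · b₀) + λ tr(adj a₁ · b₁) + λ⁻¹ tr(adj a₂ · b₂)
  − tr(b₀a₁a₂) − tr(a₀b₁a₂) − tr(a₀a₁b₂)`. -/
def titsDN (lam : Rˣ) (x y : Tits R) : R :=
  (x.1.adjugate * y.1).trace + (lam : R) * (x.2.1.adjugate * y.2.1).trace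
    + ((lam⁻¹ : Rˣ) : R) * (x.2.2.adjugate * y.2.2).trace
    - (y.1 * x.2.1 * x.2.2).trace - (x.1 * y.2.1 * x.2.2).trace
    - (x.1 * x.2.1 * y.2.2).trace

/-- The base point `e = (1,0,0)` of the first Tits construction. -/
def titsE : Tits R := (1, 0, 0)

end TitsDefs



section Aux
variable {R : Type*} [CommRing R]

lemma adj_polar (t : R) (y b : Matrix (Fin 3) (Fin 3) R) :
    adjugate (t • y.adjugate + b) - adjugate (t • y.adjugate) - adjugate b
      = t • ((y * b).trace • y - y * b * y) := by
  ext i j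
  fin_cases i <;> fin_cases j <;>
    simp [adjugate_fin_three, Matrix.mul_apply, Matrix.trace_fin_three,
      Fin.sum_univ_succ, smul_eq_mul] <;> ring

lemma titsU_midY_formula (lam : Rˣ) (y : Matrix (Fin 3) (Fin 3) R) (z : Tits R) :
    titsU lam ((0, y, 0) : Tits R) z =
        ((lam : R) • (z.2.1 * y.adjugate), y * z.2.2 * y, (lam : R) • (y.adjugate * z.1)) := by
  obtain ⟨b0, b1, b2⟩ := z
  have key : ((lam⁻¹ : Rˣ) : R) • ((lam : R) • y.adjugate + b2).adjugate
      - ((lam⁻¹ : Rˣ) : R) • ((lam : R) • y.adjugate).adjugate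
      - ((lam⁻¹ : Rˣ) : R) • b2.adjugate = (y * b2).trace • y - y * b2 * y := by
    rw [← smul_sub, ← smul_sub, adj_polar, smul_smul]
    norm_num
  refine Prod.ext ?_ (Prod.ext ?_ ?_)
  · simp [titsU, titsT, titsCross, titsSharp, mul_add, mul_smul_comm]
  · simp only [titsU, titsT, titsCross, titsSharp]
    simp only [Prod.fst_add, Prod.snd_add, Prod.smul_mk, Prod.mk_sub_mk, Prod.snd_sub,
      Prod.fst_sub, zero_add, add_zero,
      mul_zero, zero_mul, sub_zero, zero_sub, adjugate_zero, smul_zero, Matrix.trace_zero]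
    have e : ((lam⁻¹ : Rˣ) : R) • ((lam : R) • y.adjugate + b2).adjugate - b0 * b1
        - ((lam⁻¹ : Rˣ) : R) • ((lam : R) • y.adjugate).adjugate
        - (((lam⁻¹ : Rˣ) : R) • b2.adjugate - b0 * b1)
        = (y * b2).trace • y - y * b2 * y := by rw [← key]; abel
    rw [e]; abel
  · simp [titsU, titsT, titsCross, titsSharp, add_mul, smul_mul_assoc]

end Aux

/-- `U_(0,y,0) (b₀,b₁,b₂) = (λ • (b₁ ⬝ adj y), y ⬝ b₂ ⬝ y, λ • (adj y ⬝ b₀))`,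
and the `R`-linear map `U_(0,y,0) : J → J` is bijective if and only if `det y`
is a unit of `R`. -/
theorem titsU_midY (R : Type*) [CommRing R] (lam : Rˣ) (y : Matrix (Fin 3) (Fin 3) R) :
    (∀ z : Tits R, titsU lam ((0, y, 0) : Tits R) z =
        ((lam : R) • (z.2.1 * y.adjugate), y * z.2.2 * y, (lam : R) • (y.adjugate * z.1))) ∧
    (Function.Bijective (titsU lam ((0, y, 0) : Tits R)) ↔ IsUnit y.det) := by
  refine ⟨titsU_midY_formula lam y, ?_⟩
  constructor
  · intro hbij
    obtain ⟨z, hz⟩ := hbij.2 (0, 1, 0)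
    rw [titsU_midY_formula] at hz
    have h2 : y * z.2.2 * y = 1 := congrArg (fun p => p.2.1) hz
    have hd : y.det * (z.2.2.det * y.det) = 1 := by
      have := congrArg Matrix.det h2
      simpa [Matrix.det_mul, mul_assoc] using this
    exact IsUnit.of_mul_eq_one _ hd
  · intro hy
    have hadj : IsUnit y.adjugate.det := by
      rw [Matrix.det_adjugate]; exact hy.pow _
    refine Function.bijective_iff_has_inverse.mpr
      ⟨fun c => (((lam⁻¹ : Rˣ) : R) • (y.adjugate⁻¹ * c.2.2),
                 ((lam⁻¹ : Rˣ) : R) • (c.1 * y.adjugate⁻¹),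
                 y⁻¹ * c.2.1 * y⁻¹), ?_, ?_⟩
    · intro z
      rw [titsU_midY_formula]
      refine Prod.ext ?_ (Prod.ext ?_ ?_)
      · show ((lam⁻¹ : Rˣ) : R) • (y.adjugate⁻¹ * ((lam : R) • (y.adjugate * z.1))) = z.1
        rw [mul_smul_comm, smul_smul, Units.inv_mul, one_smul, ← mul_assoc,
          Matrix.nonsing_inv_mul _ hadj, one_mul]
      · show ((lam⁻¹ : Rˣ) : R) • (((lam : R) • (z.2.1 * y.adjugate)) * y.adjugate⁻¹) = z.2.1
        rw [smul_mul_assoc, smul_smul, Units.inv_mul, one_smul, mul_assoc,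
          Matrix.mul_nonsing_inv _ hadj, mul_one]
      · show y⁻¹ * (y * z.2.2 * y) * y⁻¹ = z.2.2
        rw [Matrix.mul_assoc y⁻¹, Matrix.mul_nonsing_inv_cancel_right _ _ hy,
          Matrix.nonsing_inv_mul_cancel_left _ _ hy]
    · intro c
      rw [titsU_midY_formula]
      refine Prod.ext ?_ (Prod.ext ?_ ?_)
      · show (lam : R) • ((((lam⁻¹ : Rˣ) : R) • (c.1 * y.adjugate⁻¹)) * y.adjugate) = c.1
        rw [smul_mul_assoc, smul_smul, Units.mul_inv, one_smul, mul_assoc,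
          Matrix.nonsing_inv_mul _ hadj, mul_one]
      · show y * (y⁻¹ * c.2.1 * y⁻¹) * y = c.2.1
        rw [Matrix.mul_assoc y, Matrix.nonsing_inv_mul_cancel_right _ _ hy,
          Matrix.mul_nonsing_inv_cancel_left _ _ hy]
      · show (lam : R) • (y.adjugate * (((lam⁻¹ : Rˣ) : R) • (y.adjugate⁻¹ * c.2.2))) = c.2.2
        rw [mul_smul_comm, smul_smul, Units.mul_inv, one_smul, ← mul_assoc,
          Matrix.mul_nonsing_inv _ hadj, one_mul]
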